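/- arXiv:1710.03845 — 3 statements merged into one kernel-verified Lean document; each statement's English description precedes it below -/
import Mathlib

section
/- Let c ≥ 2 be an integer, fix an integer n ≥ 2, and consider the random walk on ℤ_m for m = c^{n−1} determined by the sequence G i = c^{i−1} (i = 1, …, n). Set κ = 1/(1 − cos(π/c)). Then for every real ε > 0 and every natural number t with t ≥ κ·n·log((n−1)·(c−1)) − κ·n·log(log(4ε² + 1)), the t-step distribution p satisfies (1/2)·Σ_{x ∈ ZMod m} |p t x − π x| ≤ ε, where π is the uniform distribution. -/
set_option maxHeartbeats 1000000

open Finset Real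

/-- Step distribution of the random walk on `ℤ_m` with steps drawn uniformly from
`{G 1, …, G n}`. -/
noncomputable def stepDist (G : ℕ → ℕ) (n m : ℕ) [NeZero m] (x : ZMod m) : ℝ :=
  (1 / n : ℝ) * ((Finset.Icc 1 n).filter (fun i => (G i : ZMod m) = x)).card

/-- `t`-step distribution of the random walk started at `0`. -/
noncomputable def walkDist (G : ℕ → ℕ) (n m : ℕ) [NeZero m] : ℕ → ZMod m → ℝ
  | 0 => fun x => if x = 0 then 1 else 0
  | t + 1 => fun x => ∑ y : ZMod m, walkDist G n m t y * stepDist G n m (x - y)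

namespace RWgeo

lemma abs_cos_add_nat_mul_pi (x : ℝ) (z : ℕ) : |Real.cos (x + z * π)| = |Real.cos x| := by
  induction z with
  | zero => simp
  | succ k ih =>
    have h : x + ((k+1 : ℕ) : ℝ) * π = (x + (k:ℕ) * π) + π := by push_cast; ring
    rw [h, Real.cos_add_pi, abs_neg, ih]

lemma one_sub_cos_add (A B : ℝ) (hA0 : 0 ≤ A) (hA : A ≤ π) (hB0 : 0 ≤ B) (hB : B ≤ π) :
    1 - Real.cos (A + B) ≤ 2 * ((1 - Real.cos A) + (1 - Real.cos B)) := by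
  have sa := Real.sin_nonneg_of_nonneg_of_le_pi hA0 hA
  have sb := Real.sin_nonneg_of_nonneg_of_le_pi hB0 hB
  have ia := Real.sin_sq_add_cos_sq A
  have ib := Real.sin_sq_add_cos_sq B
  rw [Real.cos_add]
  nlinarith [sq_nonneg (Real.sin A - Real.sin B), sq_nonneg (Real.cos A + Real.cos B - 2)]

lemma digit_sum (c : ℕ) (hc : 2 ≤ c) (κ' x τ : ℝ) (hκ0 : 0 < κ')
    (hκ1 : κ' * (1 - Real.cos (π / c)) = 1) (hx0 : 0 < x) (hx1 : x ≤ 1)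
    (hτ0 : 0 ≤ τ) (hτ1 : τ ≤ 1) :
    ∑ d ∈ range c, x ^ (2 * κ' * (1 - |Real.cos (π * ((d:ℝ) + τ) / c)|)) ≤ 1 + ((c:ℝ) - 1) * x := by
  obtain ⟨c', rfl⟩ : ∃ c', c = c' + 2 := ⟨c - 2, by omega⟩
  set C : ℝ := ((c' + 2 : ℕ) : ℝ) with hC
  have hC2 : (2:ℝ) ≤ C := by rw [hC]; exact_mod_cast by omega
  have hCpos : (0:ℝ) < C := by linarith
  have hπ := Real.pi_pos
  -- middle bound
  have hmid : ∀ i, i < c' → x ^ (2 * κ' * (1 - |Real.cos (π * (((i+1:ℕ):ℝ) + τ) / C)|)) ≤ x := by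
    intro i hi
    have hii : ((i:ℝ)) + 1 ≤ (c':ℝ) := by exact_mod_cast hi
    have h1 : (1:ℝ) ≤ ((i+1:ℕ):ℝ) + τ := by push_cast; linarith
    have h2 : ((i+1:ℕ):ℝ) + τ ≤ C - 1 := by
      rw [hC]; push_cast; linarith
    set y : ℝ := π * (((i+1:ℕ):ℝ) + τ) / C with hy
    have hy1 : π / C ≤ y := by
      rw [hy]
      gcongr
      nlinarith
    have hy2 : y ≤ π - π / C := by
      rw [hy, div_le_iff₀ hCpos]
      have hid : (π - π/C) * C = π * (C - 1) := by field_simp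
      rw [hid]
      nlinarith
    have hycos : |Real.cos y| ≤ Real.cos (π / C) := by
      have hpc0 : 0 ≤ π / C := by positivity
      have hyπ : y ≤ π := by
        have : 0 ≤ π / C := hpc0
        linarith
      have hcl : Real.cos y ≤ Real.cos (π / C) :=
        Real.cos_le_cos_of_nonneg_of_le_pi hpc0 hyπ hy1
      have hcr : -Real.cos y ≤ Real.cos (π / C) := by
        rw [← Real.cos_pi_sub]
        apply Real.cos_le_cos_of_nonneg_of_le_pi hpc0 (by linarith)
        linarith
      exact abs_le.2 ⟨by linarith, hcl⟩
    have hexpo : (1:ℝ) ≤ 2 * κ' * (1 - |Real.cos y|) := by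
      have h3 : 1 - Real.cos (π/C) ≤ 1 - |Real.cos y| := by linarith
      nlinarith
    calc x ^ (2 * κ' * (1 - |Real.cos y|)) ≤ x ^ (1:ℝ) :=
          Real.rpow_le_rpow_of_exponent_ge hx0 hx1 hexpo
      _ = x := Real.rpow_one x
  -- edges
  have hA0 : 0 ≤ π * τ / C := by positivity
  have hB0 : 0 ≤ π * (1 - τ) / C := by
    apply div_nonneg ?_ (le_of_lt hCpos)
    nlinarith
  have hA2 : π * τ / C ≤ π / 2 := by
    rw [div_le_iff₀ hCpos]; nlinarith
  have hB2 : π * (1 - τ) / C ≤ π / 2 := by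
    rw [div_le_iff₀ hCpos]; nlinarith
  set a : ℝ := 2 * κ' * (1 - Real.cos (π * τ / C)) with ha
  set b : ℝ := 2 * κ' * (1 - Real.cos (π * (1 - τ) / C)) with hb
  have hab : (1:ℝ) ≤ a + b := by
    have htrig := one_sub_cos_add (π * τ / C) (π * (1 - τ) / C) hA0 (by linarith) hB0 (by linarith)
    have hsum : π * τ / C + π * (1 - τ) / C = π / C := by field_simp; ring
    rw [hsum] at htrig
    nlinarith
  have ha0 : 0 ≤ a := by
    have := Real.cos_le_one (π * τ / C); nlinarith
  have hb0 : 0 ≤ b := by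
    have := Real.cos_le_one (π * (1 - τ) / C); nlinarith
  have hedge : x ^ a + x ^ b ≤ 1 + x := by
    have h1 : x ^ a ≤ 1 := Real.rpow_le_one (le_of_lt hx0) hx1 ha0
    have h2 : x ^ b ≤ 1 := Real.rpow_le_one (le_of_lt hx0) hx1 hb0
    have h4 : x ^ (a+b) ≤ x := by
      calc x ^ (a+b) ≤ x ^ (1:ℝ) := Real.rpow_le_rpow_of_exponent_ge hx0 hx1 hab
        _ = x := Real.rpow_one x
    rw [Real.rpow_add hx0] at h4
    have hm := mul_nonneg (sub_nonneg.2 h1) (sub_nonneg.2 h2)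
    nlinarith [hm, h4]
  -- identify the edge terms
  have hf0 : x ^ (2 * κ' * (1 - |Real.cos (π * (((0:ℕ):ℝ) + τ) / C)|)) = x ^ a := by
    rw [ha]
    congr 1
    rw [Nat.cast_zero, zero_add]
    rw [abs_of_nonneg (Real.cos_nonneg_of_mem_Icc ⟨by linarith, hA2⟩)]
  have hftop : x ^ (2 * κ' * (1 - |Real.cos (π * (((c'+1:ℕ):ℝ) + τ) / C)|)) = x ^ b := by
    rw [hb]
    congr 1
    have harg : π * (((c'+1:ℕ):ℝ) + τ) / C = π - π * (1 - τ) / C := by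
      rw [hC]; push_cast; field_simp; ring
    rw [harg, Real.cos_pi_sub, abs_neg,
      abs_of_nonneg (Real.cos_nonneg_of_mem_Icc ⟨by linarith, hB2⟩)]
  have hmidsum : ∑ i ∈ range c', x ^ (2 * κ' * (1 - |Real.cos (π * (((i+1:ℕ):ℝ) + τ) / C)|)) ≤ (c':ℝ) * x := by
    calc ∑ i ∈ range c', x ^ (2 * κ' * (1 - |Real.cos (π * (((i+1:ℕ):ℝ) + τ) / C)|))
        ≤ ∑ _i ∈ range c', x := Finset.sum_le_sum (fun i hi => hmid i (Finset.mem_range.1 hi))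
      _ = (c':ℝ) * x := by rw [Finset.sum_const, Finset.card_range]; ring
  have hCm1 : C - 1 = (c':ℝ) + 1 := by rw [hC]; push_cast; ring
  rw [Finset.sum_range_succ, Finset.sum_range_succ', hCm1, hf0, hftop]
  calc (∑ i ∈ range c', x ^ (2 * κ' * (1 - |Real.cos (π * (((i+1:ℕ):ℝ) + τ) / C)|))) + x ^ a + x ^ b
      ≤ (c':ℝ) * x + (1 + x) := by linarith
    _ = 1 + ((c':ℝ) + 1) * x := by ring

lemma key_induction (c : ℕ) (hc : 2 ≤ c) (κ' x : ℝ) (hκ0 : 0 < κ')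
    (hκ1 : κ' * (1 - Real.cos (π / c)) = 1) (hx0 : 0 < x) (hx1 : x ≤ 1) :
    ∀ l : ℕ, (∑ v ∈ range (c ^ l), ∏ e ∈ range l,
      x ^ (2 * κ' * (1 - |Real.cos (π * (v:ℝ) / (c:ℝ) ^ (e+1))|)))
      ≤ (1 + ((c:ℝ) - 1) * x) ^ l := by
  have hcR : (2:ℝ) ≤ (c:ℝ) := by exact_mod_cast hc
  have hK0 : (0:ℝ) ≤ 1 + ((c:ℝ) - 1) * x := by nlinarith
  intro l
  induction l with
  | zero => simp
  | succ l ih =>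
    have hclpos : 0 < c ^ l := Nat.pow_pos (by omega)
    have hsplit : (∑ v ∈ range (c ^ (l+1)), ∏ e ∈ range (l+1),
        x ^ (2 * κ' * (1 - |Real.cos (π * (v:ℝ) / (c:ℝ) ^ (e+1))|)))
        = ∑ p ∈ range c ×ˢ range (c ^ l), ∏ e ∈ range (l+1),
        x ^ (2 * κ' * (1 - |Real.cos (π * ((p.1 * c ^ l + p.2 : ℕ):ℝ) / (c:ℝ) ^ (e+1))|)) := by
      apply Finset.sum_nbij' (fun v => (v / c ^ l, v % c ^ l)) (fun p => p.1 * c ^ l + p.2)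
      · intro v hv
        rw [Finset.mem_range] at hv
        rw [Finset.mem_product, Finset.mem_range, Finset.mem_range]
        refine ⟨Nat.div_lt_of_lt_mul ?_, Nat.mod_lt _ hclpos⟩
        exact lt_of_lt_of_le hv (le_of_eq (by ring))
      · intro p hp
        rw [Finset.mem_product, Finset.mem_range, Finset.mem_range] at hp
        rw [Finset.mem_range, pow_succ]
        calc p.1 * c ^ l + p.2 < p.1 * c ^ l + c ^ l := by omega
          _ = (p.1 + 1) * c ^ l := by ring
          _ ≤ c * c ^ l := Nat.mul_le_mul_right _ (by omega)
          _ = c ^ l * c := by ring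
      · intro v _
        show v / c ^ l * c ^ l + v % c ^ l = v
        rw [mul_comm]
        exact Nat.div_add_mod v (c ^ l)
      · intro p hp
        rw [Finset.mem_product, Finset.mem_range, Finset.mem_range] at hp
        have h1 : (p.1 * c ^ l + p.2) / c ^ l = p.1 := by
          rw [mul_comm, Nat.mul_add_div hclpos, Nat.div_eq_of_lt hp.2, add_zero]
        have h2 : (p.1 * c ^ l + p.2) % c ^ l = p.2 := by
          rw [mul_comm, Nat.mul_add_mod, Nat.mod_eq_of_lt hp.2]
        show ((p.1 * c ^ l + p.2) / c ^ l, (p.1 * c ^ l + p.2) % c ^ l) = p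
        rw [h1, h2]
      · intro v _
        have hv' : v / c ^ l * c ^ l + v % c ^ l = v := by
          rw [mul_comm]; exact Nat.div_add_mod v (c ^ l)
        show _ = ∏ e ∈ range (l+1),
          x ^ (2 * κ' * (1 - |Real.cos (π * ((v / c ^ l * c ^ l + v % c ^ l : ℕ):ℝ) / (c:ℝ) ^ (e+1))|))
        rw [hv']
    rw [hsplit, Finset.sum_product]
    have hprod : ∀ d ∈ range c, ∀ r ∈ range (c ^ l),
        (∏ e ∈ range (l+1), x ^ (2 * κ' * (1 - |Real.cos (π * ((d * c ^ l + r : ℕ):ℝ) / (c:ℝ) ^ (e+1))|)))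
        = (∏ e ∈ range l, x ^ (2 * κ' * (1 - |Real.cos (π * (r:ℝ) / (c:ℝ) ^ (e+1))|)))
          * x ^ (2 * κ' * (1 - |Real.cos (π * ((d:ℝ) + (r:ℝ)/(c:ℝ)^l) / (c:ℝ))|)) := by
      intro d hd r hr
      rw [Finset.prod_range_succ]
      have h1 : (∏ e ∈ range l, x ^ (2 * κ' * (1 - |Real.cos (π * ((d * c ^ l + r : ℕ):ℝ) / (c:ℝ) ^ (e+1))|)))
          = ∏ e ∈ range l, x ^ (2 * κ' * (1 - |Real.cos (π * (r:ℝ) / (c:ℝ) ^ (e+1))|)) := by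
        apply Finset.prod_congr rfl
        intro e he
        rw [Finset.mem_range] at he
        have harg : π * ((d * c ^ l + r : ℕ):ℝ) / (c:ℝ) ^ (e+1)
            = π * (r:ℝ) / (c:ℝ) ^ (e+1) + ((d * c ^ (l-1-e) : ℕ):ℝ) * π := by
          have hp : ((c:ℝ)) ^ l = (c:ℝ) ^ (e+1) * (c:ℝ) ^ (l-1-e) := by
            rw [← pow_add]; congr 1; omega
          have hne : ((c:ℝ)) ^ (e+1) ≠ 0 := by positivity
          push_cast
          rw [hp]
          field_simp
          ring
        rw [harg, abs_cos_add_nat_mul_pi]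
      have htop : π * ((d * c ^ l + r : ℕ):ℝ) / (c:ℝ) ^ (l+1)
          = π * ((d:ℝ) + (r:ℝ)/(c:ℝ)^l) / (c:ℝ) := by
        have hne : ((c:ℝ)) ^ l ≠ 0 := by positivity
        have hne2 : ((c:ℝ)) ≠ 0 := by positivity
        rw [pow_succ]
        push_cast
        field_simp
      rw [h1, htop]
    calc (∑ d ∈ range c, ∑ r ∈ range (c ^ l), ∏ e ∈ range (l+1),
            x ^ (2 * κ' * (1 - |Real.cos (π * ((d * c ^ l + r : ℕ):ℝ) / (c:ℝ) ^ (e+1))|)))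
        = ∑ d ∈ range c, ∑ r ∈ range (c ^ l),
            (∏ e ∈ range l, x ^ (2 * κ' * (1 - |Real.cos (π * (r:ℝ) / (c:ℝ) ^ (e+1))|)))
            * x ^ (2 * κ' * (1 - |Real.cos (π * ((d:ℝ) + (r:ℝ)/(c:ℝ)^l) / (c:ℝ))|)) := by
            apply Finset.sum_congr rfl; intro d hd
            apply Finset.sum_congr rfl; intro r hr
            exact hprod d hd r hr
      _ = ∑ r ∈ range (c ^ l), ∑ d ∈ range c,
            (∏ e ∈ range l, x ^ (2 * κ' * (1 - |Real.cos (π * (r:ℝ) / (c:ℝ) ^ (e+1))|)))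
            * x ^ (2 * κ' * (1 - |Real.cos (π * ((d:ℝ) + (r:ℝ)/(c:ℝ)^l) / (c:ℝ))|)) := Finset.sum_comm
      _ = ∑ r ∈ range (c ^ l),
            (∏ e ∈ range l, x ^ (2 * κ' * (1 - |Real.cos (π * (r:ℝ) / (c:ℝ) ^ (e+1))|)))
            * ∑ d ∈ range c, x ^ (2 * κ' * (1 - |Real.cos (π * ((d:ℝ) + (r:ℝ)/(c:ℝ)^l) / (c:ℝ))|)) := by
            apply Finset.sum_congr rfl; intro r hr; rw [Finset.mul_sum]
      _ ≤ ∑ r ∈ range (c ^ l),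
            (∏ e ∈ range l, x ^ (2 * κ' * (1 - |Real.cos (π * (r:ℝ) / (c:ℝ) ^ (e+1))|)))
            * (1 + ((c:ℝ) - 1) * x) := by
            apply Finset.sum_le_sum
            intro r hr
            rw [Finset.mem_range] at hr
            have hτ0 : (0:ℝ) ≤ (r:ℝ)/(c:ℝ)^l := by positivity
            have hτ1 : (r:ℝ)/(c:ℝ)^l ≤ 1 := by
              rw [div_le_one (by positivity)]
              exact_mod_cast le_of_lt hr
            exact mul_le_mul_of_nonneg_left
              (digit_sum c hc κ' x _ hκ0 hκ1 hx0 hx1 hτ0 hτ1)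
              (Finset.prod_nonneg (fun e _ => Real.rpow_nonneg (le_of_lt hx0) _))
      _ = (∑ r ∈ range (c ^ l),
            ∏ e ∈ range l, x ^ (2 * κ' * (1 - |Real.cos (π * (r:ℝ) / (c:ℝ) ^ (e+1))|)))
            * (1 + ((c:ℝ) - 1) * x) := by rw [Finset.sum_mul]
      _ ≤ (1 + ((c:ℝ) - 1) * x) ^ l * (1 + ((c:ℝ) - 1) * x) :=
            mul_le_mul_of_nonneg_right ih hK0
      _ = (1 + ((c:ℝ) - 1) * x) ^ (l+1) := by rw [pow_succ]


noncomputable def psi (m : ℕ) [NeZero m] (w : ZMod m) : ℂ :=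
  Complex.exp (2 * Real.pi * Complex.I * (ZMod.val w : ℂ) / m)

variable {m : ℕ} [NeZero m]

lemma exp_nat_two_pi (d : ℕ) : Complex.exp (d * (2 * Real.pi * Complex.I)) = 1 := by
  have := Complex.exp_int_mul_two_pi_mul_I (d : ℤ)
  push_cast at this
  exact this

lemma exp_congr (A B : ℕ) (h : A % m = B % m) :
    Complex.exp (2 * Real.pi * Complex.I * A / m) = Complex.exp (2 * Real.pi * Complex.I * B / m) := by
  have hm : (m:ℂ) ≠ 0 := Nat.cast_ne_zero.2 (NeZero.ne m)
  have key : ∀ A : ℕ, Complex.exp (2 * Real.pi * Complex.I * A / m)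
      = Complex.exp (2 * Real.pi * Complex.I * (A % m : ℕ) / m) := by
    intro A
    conv_lhs => rw [show A = m * (A / m) + A % m from (Nat.div_add_mod A m).symm]
    have harg : 2 * Real.pi * Complex.I * ((m * (A / m) + A % m : ℕ) : ℂ) / m
        = ((A / m : ℕ) : ℂ) * (2 * Real.pi * Complex.I) + 2 * Real.pi * Complex.I * ((A % m : ℕ) : ℂ) / m := by
      push_cast
      field_simp
    rw [harg, Complex.exp_add, exp_nat_two_pi, one_mul]
  rw [key A, key B, h]

lemma psi_natCast (A : ℕ) : psi m (A : ZMod m) = Complex.exp (2 * Real.pi * Complex.I * A / m) := by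
  unfold psi
  rw [ZMod.val_natCast]
  exact exp_congr (A % m) A (Nat.mod_mod_of_dvd A dvd_rfl)

lemma psi_add (a b : ZMod m) : psi m (a + b) = psi m a * psi m b := by
  unfold psi
  rw [ZMod.val_add]
  rw [exp_congr ((a.val + b.val) % m) (a.val + b.val) (Nat.mod_mod_of_dvd _ dvd_rfl)]
  have harg : 2 * Real.pi * Complex.I * ((a.val + b.val : ℕ) : ℂ) / m
      = 2 * Real.pi * Complex.I * (a.val : ℂ) / m + 2 * Real.pi * Complex.I * (b.val : ℂ) / m := by
    push_cast
    ring
  rw [harg, Complex.exp_add]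

lemma psi_zero : psi m 0 = 1 := by
  unfold psi
  simp

lemma norm_psi (w : ZMod m) : ‖psi m w‖ = 1 := by
  unfold psi
  rw [show 2 * Real.pi * Complex.I * (w.val : ℂ) / m = ((2 * Real.pi * w.val / m : ℝ) : ℂ) * Complex.I by
    push_cast; ring]
  exact Complex.norm_exp_ofReal_mul_I _

lemma psi_conj (w : ZMod m) : (starRingEnd ℂ) (psi m w) = psi m (-w) := by
  have h1 : psi m w * psi m (-w) = 1 := by
    rw [← psi_add]
    simp [psi_zero]
  rw [← Complex.inv_eq_conj (norm_psi w)]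
  exact inv_eq_of_mul_eq_one_right h1

lemma psi_nat_mul (z : ZMod m) (j : ℕ) : psi m ((j : ZMod m) * z) = psi m z ^ j := by
  induction j with
  | zero => simpa using psi_zero
  | succ j ih =>
    have h : ((j + 1 : ℕ) : ZMod m) * z = (j : ZMod m) * z + z := by push_cast; ring
    rw [h, psi_add, ih, pow_succ]

lemma sum_psi_mul_ne (z : ZMod m) (hz : z ≠ 0) : ∑ k : ZMod m, psi m (k * z) = 0 := by
  have h1 : ∀ k : ZMod m, psi m (k * z) = psi m z ^ k.val := by
    intro k
    rw [← psi_nat_mul]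
    congr 1
    rw [ZMod.natCast_val, ZMod.cast_id]
  rw [Finset.sum_congr rfl (fun k _ => h1 k)]
  have h2 : ∑ k : ZMod m, psi m z ^ k.val = ∑ v ∈ range m, psi m z ^ v := by
    apply Finset.sum_nbij' (fun k : ZMod m => k.val) (fun v => (v : ZMod m))
    · intro k _; exact Finset.mem_range.2 (ZMod.val_lt k)
    · intro v _; exact Finset.mem_univ _
    · intro k _; rw [ZMod.natCast_val, ZMod.cast_id]
    · intro v hv; exact ZMod.val_cast_of_lt (Finset.mem_range.1 hv)
    · intro k _; rfl
  rw [h2]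
  have hvpos : 0 < z.val := by
    rcases Nat.eq_zero_or_pos z.val with h | h
    · exact absurd ((ZMod.val_eq_zero z).1 h) hz
    · exact h
  have hmpos : 0 < m := Nat.pos_of_ne_zero (NeZero.ne m)
  have hne1 : psi m z ≠ 1 := by
    unfold psi
    intro hcontra
    rw [Complex.exp_eq_one_iff] at hcontra
    obtain ⟨nn, hnn⟩ := hcontra
    have hπI : (2 * (Real.pi:ℂ) * Complex.I : ℂ) ≠ 0 := by
      simp [Real.pi_ne_zero, Complex.I_ne_zero]
    have hv : ((z.val:ℂ)/m) = (nn:ℂ) := by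
      apply mul_left_cancel₀ hπI
      calc (2 * (Real.pi:ℂ) * Complex.I) * ((z.val:ℂ)/m)
          = 2 * (Real.pi:ℂ) * Complex.I * (z.val:ℂ) / m := by ring
        _ = (nn:ℂ) * (2 * (Real.pi:ℂ) * Complex.I) := hnn
        _ = (2 * (Real.pi:ℂ) * Complex.I) * (nn:ℂ) := by ring
    have hvR : ((z.val:ℝ)/m) = (nn:ℝ) := by
      have h2 : ((((z.val:ℝ))/m : ℝ) : ℂ) = (((nn:ℝ)) : ℂ) := by push_cast; exact hv
      exact_mod_cast h2
    have h0 : (0:ℝ) < (z.val:ℝ)/m := by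
      apply div_pos
      · exact_mod_cast hvpos
      · exact_mod_cast hmpos
    have h1 : (z.val:ℝ)/m < 1 := by
      rw [div_lt_one (by exact_mod_cast hmpos)]
      exact_mod_cast ZMod.val_lt z
    rw [hvR] at h0 h1
    have hi0 : (0:ℤ) < nn := by exact_mod_cast h0
    have hi1 : nn < 1 := by exact_mod_cast h1
    omega
  have hpow : psi m z ^ m = 1 := by
    unfold psi
    rw [← Complex.exp_nat_mul]
    rw [show (m:ℂ) * (2 * (Real.pi:ℂ) * Complex.I * (z.val:ℂ)/m) = (z.val:ℕ) * (2 * (Real.pi:ℂ) * Complex.I) by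
      have hm : (m:ℂ) ≠ 0 := Nat.cast_ne_zero.2 (NeZero.ne m)
      field_simp]
    exact exp_nat_two_pi _
  rw [geom_sum_eq hne1, hpow]
  simp

lemma sum_psi (w : ZMod m) : ∑ k : ZMod m, psi m (k * w) = if w = 0 then (m:ℂ) else 0 := by
  split_ifs with h
  · subst h
    simp only [mul_zero, psi_zero]
    rw [Finset.sum_const, Finset.card_univ, ZMod.card]
    simp
  · exact sum_psi_mul_ne w h

noncomputable def phat (G : ℕ → ℕ) (n m : ℕ) [NeZero m] (t : ℕ) (k : ZMod m) : ℂ :=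
  ∑ x : ZMod m, (walkDist G n m t x : ℂ) * psi m (k * x)

noncomputable def muhat (G : ℕ → ℕ) (n m : ℕ) [NeZero m] (k : ZMod m) : ℂ :=
  ∑ x : ZMod m, (stepDist G n m x : ℂ) * psi m (k * x)

lemma step_sum (G : ℕ → ℕ) (n : ℕ) (hn : 0 < n) :
    ∑ x : ZMod m, stepDist G n m x = 1 := by
  unfold stepDist
  rw [← Finset.mul_sum]
  have h1 : ∑ x : ZMod m, (((Finset.Icc 1 n).filter (fun i => (G i : ZMod m) = x)).card : ℝ)
      = ((Finset.Icc 1 n).card : ℝ) := by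
    rw [← Nat.cast_sum]
    congr 1
    exact (Finset.card_eq_sum_card_fiberwise (fun i _ => Finset.mem_univ ((G i : ZMod m)))).symm
  rw [h1, Nat.card_Icc]
  have : ((n + 1 - 1 : ℕ) : ℝ) = (n:ℝ) := by norm_num
  rw [this]
  field_simp

lemma walk_sum (G : ℕ → ℕ) (n : ℕ) (hn : 0 < n) (t : ℕ) :
    ∑ x : ZMod m, walkDist G n m t x = 1 := by
  induction t with
  | zero =>
    show ∑ x : ZMod m, (if x = 0 then (1:ℝ) else 0) = 1
    simp
  | succ t ih =>
    show ∑ x : ZMod m, ∑ y : ZMod m, walkDist G n m t y * stepDist G n m (x - y) = 1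
    rw [Finset.sum_comm]
    have h1 : ∀ y : ZMod m, ∑ x : ZMod m, walkDist G n m t y * stepDist G n m (x - y)
        = walkDist G n m t y := by
      intro y
      rw [← Finset.mul_sum]
      have h2 : ∑ x : ZMod m, stepDist G n m (x - y) = ∑ u : ZMod m, stepDist G n m u := by
        exact Fintype.sum_equiv (Equiv.subRight y) _ _ (fun x => rfl)
      rw [h2, step_sum G n hn, mul_one]
    rw [Finset.sum_congr rfl (fun y _ => h1 y), ih]

lemma phat_pow (G : ℕ → ℕ) (n : ℕ) (t : ℕ) (k : ZMod m) :
    phat G n m t k = muhat G n m k ^ t := by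
  induction t with
  | zero =>
    unfold phat
    have hterm : ∀ x : ZMod m, ((walkDist G n m 0 x : ℝ) : ℂ) * psi m (k * x)
        = if x = 0 then 1 else 0 := by
      intro x
      show ((if x = 0 then (1:ℝ) else 0 : ℝ) : ℂ) * psi m (k * x) = _
      split_ifs with h
      · subst h; simp [psi_zero]
      · simp
    rw [Finset.sum_congr rfl (fun x _ => hterm x)]
    simp
  | succ t ih =>
    have hstep : phat G n m (t+1) k = phat G n m t k * muhat G n m k := by
      unfold phat
      have hw : ∀ x : ZMod m, (walkDist G n m (t+1) x : ℂ)
          = ∑ y : ZMod m, (walkDist G n m t y : ℂ) * (stepDist G n m (x - y) : ℂ) := by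
        intro x
        show ((∑ y : ZMod m, walkDist G n m t y * stepDist G n m (x - y) : ℝ) : ℂ) = _
        push_cast
        rfl
      calc ∑ x : ZMod m, (walkDist G n m (t+1) x : ℂ) * psi m (k * x)
          = ∑ x : ZMod m, ∑ y : ZMod m,
            (walkDist G n m t y : ℂ) * (stepDist G n m (x - y) : ℂ) * psi m (k * x) := by
            apply Finset.sum_congr rfl
            intro x _
            rw [hw x, Finset.sum_mul]
        _ = ∑ y : ZMod m, ∑ x : ZMod m,
            (walkDist G n m t y : ℂ) * (stepDist G n m (x - y) : ℂ) * psi m (k * x) :=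
            Finset.sum_comm
        _ = ∑ y : ZMod m, (walkDist G n m t y : ℂ) * psi m (k * y) * muhat G n m k := by
            apply Finset.sum_congr rfl
            intro y _
            have h3 : ∑ x : ZMod m, (walkDist G n m t y : ℂ) * (stepDist G n m (x - y) : ℂ) * psi m (k * x)
                = ∑ u : ZMod m, (walkDist G n m t y : ℂ) * (stepDist G n m u : ℂ) * psi m (k * (u + y)) := by
              apply Fintype.sum_equiv (Equiv.subRight y)
              intro x
              simp [Equiv.subRight]
            rw [h3]
            unfold muhat
            rw [Finset.mul_sum]
            apply Finset.sum_congr rfl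
            intro u _
            rw [show k * (u + y) = k * u + k * y from by ring, psi_add]
            ring
        _ = (∑ y : ZMod m, (walkDist G n m t y : ℂ) * psi m (k * y)) * muhat G n m k := by
            rw [Finset.sum_mul]
    rw [hstep, ih, pow_succ]

lemma parseval (f : ZMod m → ℝ) :
    ∑ k : ZMod m, ‖∑ x : ZMod m, (f x : ℂ) * psi m (k * x)‖^2
      = (m:ℝ) * ∑ x : ZMod m, (f x)^2 := by
  have hexp : ∀ k : ZMod m,
      ((‖∑ x : ZMod m, (f x : ℂ) * psi m (k * x)‖^2 : ℝ) : ℂ)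
      = ∑ x : ZMod m, ∑ y : ZMod m, (f x : ℂ) * (f y : ℂ) * psi m (k * (x - y)) := by
    intro k
    set F : ℂ := ∑ x : ZMod m, (f x : ℂ) * psi m (k * x) with hF
    have h1 : ((‖F‖^2 : ℝ) : ℂ) = F * (starRingEnd ℂ) F := by
      rw [Complex.mul_conj]
      norm_cast
      rw [Complex.normSq_eq_norm_sq]
    rw [h1, hF, map_sum, Finset.sum_mul_sum]
    apply Finset.sum_congr rfl
    intro x _
    apply Finset.sum_congr rfl
    intro y _
    rw [map_mul, Complex.conj_ofReal, psi_conj]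
    rw [show (f x : ℂ) * psi m (k * x) * ((f y : ℂ) * psi m (-(k * y)))
        = (f x : ℂ) * (f y : ℂ) * (psi m (k * x) * psi m (-(k * y))) from by ring]
    rw [← psi_add, show k * x + -(k * y) = k * (x - y) from by ring]
  have hcast : ((∑ k : ZMod m, ‖∑ x : ZMod m, (f x : ℂ) * psi m (k * x)‖^2 : ℝ) : ℂ)
      = (((m:ℝ) * ∑ x : ZMod m, (f x)^2 : ℝ) : ℂ) := by
    push_cast
    rw [Finset.sum_congr rfl (fun k _ => by
      have := hexp k
      push_cast at this
      exact this)]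
    rw [Finset.sum_comm]
    -- now k innermost?  currently: ∑ k ∑ x ∑ y ; sum_comm moves to ∑ x ∑ k ∑ y
    rw [Finset.sum_congr rfl (fun x _ => Finset.sum_comm)]
    -- now ∑ x ∑ y ∑ k
    have hinner : ∀ x y : ZMod m,
        ∑ k : ZMod m, (f x : ℂ) * (f y : ℂ) * psi m (k * (x - y))
        = (f x : ℂ) * (f y : ℂ) * (if x - y = 0 then (m:ℂ) else 0) := by
      intro x y
      rw [← Finset.mul_sum, sum_psi]
    rw [Finset.sum_congr rfl (fun x _ => Finset.sum_congr rfl (fun y _ => hinner x y))]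
    have houter : ∀ x : ZMod m,
        ∑ y : ZMod m, (f x : ℂ) * (f y : ℂ) * (if x - y = 0 then (m:ℂ) else 0)
        = (m:ℂ) * (f x : ℂ)^2 := by
      intro x
      have hterm : ∀ y : ZMod m, (f x : ℂ) * (f y : ℂ) * (if x - y = 0 then (m:ℂ) else 0)
          = if y = x then (m:ℂ) * (f x : ℂ)^2 else 0 := by
        intro y
        by_cases h : y = x
        · subst h; simp [sub_self]; ring
        · have : x - y ≠ 0 := fun hc => h (by rwa [sub_eq_zero, eq_comm] at hc)
          simp [this, h]
      rw [Finset.sum_congr rfl (fun y _ => hterm y)]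
      rw [Finset.sum_ite_eq' Finset.univ x (fun _ => (m:ℂ) * (f x : ℂ)^2)]
      simp
    rw [Finset.sum_congr rfl (fun x _ => houter x)]
    rw [← Finset.mul_sum]
  exact_mod_cast hcast

lemma muhat_geo (c n : ℕ) (hn : 0 < n) (k : ZMod m) :
    muhat (fun i => c ^ (i-1)) n m k
      = (1/(n:ℂ)) * ∑ j ∈ range n, psi m (k * ((c^j : ℕ) : ZMod m)) := by
  unfold muhat stepDist
  have h1 : ∀ x : ZMod m,
      (((1 / (n:ℝ)) * ((Finset.Icc 1 n).filter (fun i => ((c^(i-1) : ℕ) : ZMod m) = x)).card : ℝ) : ℂ)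
        * psi m (k * x)
      = (1/(n:ℂ)) * ((((Finset.Icc 1 n).filter (fun i => ((c^(i-1) : ℕ) : ZMod m) = x)).card : ℂ) * psi m (k * x)) := by
    intro x
    push_cast
    ring
  rw [Finset.sum_congr rfl (fun x _ => h1 x), ← Finset.mul_sum]
  congr 1
  have h2 : ∀ x : ZMod m,
      ((((Finset.Icc 1 n).filter (fun i => ((c^(i-1) : ℕ) : ZMod m) = x)).card : ℂ)) * psi m (k * x)
      = ∑ i ∈ (Finset.Icc 1 n).filter (fun i => ((c^(i-1) : ℕ) : ZMod m) = x),
          psi m (k * ((c^(i-1) : ℕ) : ZMod m)) := by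
    intro x
    rw [Finset.sum_congr rfl (fun i hi => by
      rw [(Finset.mem_filter.1 hi).2])]
    rw [Finset.sum_const]
    simp [mul_comm]
  rw [Finset.sum_congr rfl (fun x _ => h2 x)]
  rw [Finset.sum_fiberwise_of_maps_to (fun i _ => Finset.mem_univ (((c^(i-1) : ℕ) : ZMod m)))]
  apply Finset.sum_nbij' (fun i => i - 1) (fun j => j + 1)
  · intro a ha
    rw [Finset.mem_Icc] at ha
    rw [Finset.mem_range]
    omega
  · intro j hj
    rw [Finset.mem_range] at hj
    rw [Finset.mem_Icc]
    omega
  · intro a ha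
    rw [Finset.mem_Icc] at ha
    omega
  · intro j _
    omega
  · intro a _
    rfl

lemma norm_one_add_exp (θ : ℝ) :
    ‖1 + Complex.exp ((θ:ℂ) * Complex.I)‖ = 2 * |Real.cos (θ/2)| := by
  rw [Complex.exp_mul_I]
  have h1 : (1:ℂ) + (Complex.cos θ + Complex.sin θ * Complex.I)
      = ((1 + Real.cos θ : ℝ) : ℂ) + ((Real.sin θ : ℝ) : ℂ) * Complex.I := by
    rw [← Complex.ofReal_cos, ← Complex.ofReal_sin]
    push_cast
    ring
  rw [h1, Complex.norm_def, Complex.normSq_add_mul_I]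
  have h2 : (1 + Real.cos θ)^2 + (Real.sin θ)^2 = (2 * |Real.cos (θ/2)|)^2 := by
    have hc := Real.cos_sq (θ/2)
    rw [show 2 * (θ/2) = θ from by ring] at hc
    have hs := Real.sin_sq_add_cos_sq θ
    have habs : |Real.cos (θ/2)|^2 = Real.cos (θ/2)^2 := sq_abs _
    nlinarith
  rw [h2, Real.sqrt_sq (by positivity)]

lemma pair_norm (a b : ZMod m) :
    ‖psi m a + psi m (a + b)‖ = 2 * |Real.cos (π * (b.val : ℝ) / m)| := by
  rw [psi_add, show psi m a + psi m a * psi m b = psi m a * (1 + psi m b) from by ring,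
    norm_mul, norm_psi, one_mul]
  have h1 : psi m b = Complex.exp (((2 * π * (b.val:ℝ) / m : ℝ) : ℂ) * Complex.I) := by
    unfold psi
    congr 1
    push_cast
    ring
  rw [h1, norm_one_add_exp]
  rw [show (2 * π * (b.val:ℝ) / m) / 2 = π * (b.val : ℝ) / m from by ring]

lemma half_sum (u : ℕ → ℂ) (n' : ℕ) (hu : ∀ j, ‖u j‖ = 1) :
    ‖∑ j ∈ range (n'+1), u j‖ ≤ 1 + ∑ j ∈ range n', (‖u j + u (j+1)‖/2) := by
  have hid : (2:ℂ) * ∑ j ∈ range (n'+1), u j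
      = (u 0 + u n') + ∑ j ∈ range n', (u j + u (j+1)) := by
    rw [Finset.sum_add_distrib]
    have h1 : ∑ j ∈ range n', u (j+1) = (∑ j ∈ range (n'+1), u j) - u 0 := by
      rw [Finset.sum_range_succ' u n']; ring
    have h2 : ∑ j ∈ range n', u j = (∑ j ∈ range (n'+1), u j) - u n' := by
      rw [Finset.sum_range_succ u n']; ring
    rw [h1, h2]; ring
  have hnorm2 : ‖(2:ℂ) * ∑ j ∈ range (n'+1), u j‖ = 2 * ‖∑ j ∈ range (n'+1), u j‖ := by
    rw [norm_mul]; norm_num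
  have hbound : ‖(2:ℂ) * ∑ j ∈ range (n'+1), u j‖ ≤ 2 + ∑ j ∈ range n', ‖u j + u (j+1)‖ := by
    rw [hid]
    calc ‖(u 0 + u n') + ∑ j ∈ range n', (u j + u (j+1))‖
        ≤ ‖u 0 + u n'‖ + ‖∑ j ∈ range n', (u j + u (j+1))‖ := norm_add_le _ _
      _ ≤ (‖u 0‖ + ‖u n'‖) + ∑ j ∈ range n', ‖u j + u (j+1)‖ :=
          add_le_add (norm_add_le _ _) (norm_sum_le _ _)
      _ = 2 + ∑ j ∈ range n', ‖u j + u (j+1)‖ := by rw [hu 0, hu n']; ring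
  rw [hnorm2] at hbound
  have hsum : ∑ j ∈ range n', (‖u j + u (j+1)‖/2) = (∑ j ∈ range n', ‖u j + u (j+1)‖)/2 := by
    rw [Finset.sum_div]
  linarith

lemma E_bound (c n : ℕ) (hc : 2 ≤ c) (hn : 2 ≤ n) (k : ZMod m) :
    ‖∑ j ∈ range n, psi m (k * ((c^j : ℕ) : ZMod m))‖
      ≤ (n:ℝ) - ∑ j ∈ range (n-1),
          (1 - |Real.cos (π * (((k * ((c^j * (c-1) : ℕ) : ZMod m)).val : ℕ) : ℝ) / m)|) := by
  obtain ⟨n', rfl⟩ : ∃ n', n = n' + 1 := ⟨n - 1, by omega⟩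
  have hpair : ∀ j : ℕ,
      ‖psi m (k * ((c^j : ℕ) : ZMod m)) + psi m (k * ((c^(j+1) : ℕ) : ZMod m))‖
      = 2 * |Real.cos (π * (((k * ((c^j * (c-1) : ℕ) : ZMod m)).val : ℕ) : ℝ) / m)| := by
    intro j
    have hnat : c^(j+1) = c^j + c^j * (c-1) := by
      have h1 : 1 + (c-1) = c := by omega
      calc c^(j+1) = c^j * c := pow_succ c j
        _ = c^j * (1 + (c-1)) := by rw [h1]
        _ = c^j + c^j * (c-1) := by ring
    have hcast : ((c^(j+1) : ℕ) : ZMod m) = ((c^j : ℕ) : ZMod m) + ((c^j * (c-1) : ℕ) : ZMod m) := by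
      rw [← Nat.cast_add]
      exact_mod_cast congrArg (Nat.cast : ℕ → ZMod m) hnat
    rw [hcast, mul_add]
    exact pair_norm (k * ((c^j : ℕ) : ZMod m)) (k * ((c^j * (c-1) : ℕ) : ZMod m))
  have hmain := half_sum (fun j => psi m (k * ((c^j : ℕ) : ZMod m))) n'
    (fun j => norm_psi _)
  have hrw : ∑ j ∈ range n',
      (‖psi m (k * ((c^j : ℕ) : ZMod m)) + psi m (k * ((c^(j+1) : ℕ) : ZMod m))‖/2)
      = ∑ j ∈ range n', |Real.cos (π * (((k * ((c^j * (c-1) : ℕ) : ZMod m)).val : ℕ) : ℝ) / m)| := by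
    apply Finset.sum_congr rfl
    intro j _
    rw [hpair j]
    ring
  rw [hrw] at hmain
  have hrhs : ((n'+1 : ℕ):ℝ) - ∑ j ∈ range ((n'+1)-1),
      (1 - |Real.cos (π * (((k * ((c^j * (c-1) : ℕ) : ZMod m)).val : ℕ) : ℝ) / m)|)
      = 1 + ∑ j ∈ range n', |Real.cos (π * (((k * ((c^j * (c-1) : ℕ) : ZMod m)).val : ℕ) : ℝ) / m)| := by
    rw [show (n'+1)-1 = n' from rfl, Finset.sum_sub_distrib, Finset.sum_const, Finset.card_range]
    push_cast
    ring
  rw [hrhs]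
  exact hmain

lemma muhat_pow_bound (c n : ℕ) (hc : 2 ≤ c) (hn : 2 ≤ n) (t : ℕ) (k : ZMod m)
    (κ' : ℝ) (hκ0 : 0 < κ') (hκ1 : κ' * (1 - Real.cos (π / c)) = 1) :
    ‖muhat (fun i => c ^ (i-1)) n m k‖ ^ (2*t)
      ≤ ∏ j ∈ range (n-1), Real.exp (-(t:ℝ)/(κ'*(n:ℝ)))
          ^ (2*κ'*(1 - |Real.cos (π * (((k * ((c^j * (c-1) : ℕ) : ZMod m)).val : ℕ) : ℝ) / m)|)) := by
  have hn0 : (0:ℝ) < (n:ℝ) := by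
    have : 0 < n := by omega
    exact_mod_cast this
  set w : ℕ → ℝ := fun j =>
    1 - |Real.cos (π * (((k * ((c^j * (c-1) : ℕ) : ZMod m)).val : ℕ) : ℝ) / m)| with hw
  set W : ℝ := ∑ j ∈ range (n-1), w j with hW
  have hw0 : ∀ j, 0 ≤ w j := by
    intro j
    have := abs_cos_le_one (π * (((k * ((c^j * (c-1) : ℕ) : ZMod m)).val : ℕ) : ℝ) / m)
    simp only [hw]
    linarith
  -- norm bound for muhat
  have hmu : ‖muhat (fun i => c ^ (i-1)) n m k‖ ≤ 1 - W/n := by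
    rw [muhat_geo c n (by omega) k]
    rw [norm_mul]
    have h1 : ‖(1/(n:ℂ))‖ = 1/(n:ℝ) := by
      rw [norm_div, norm_one]
      congr 1
      exact Complex.norm_natCast n
    rw [h1]
    have h2 := E_bound c n hc hn k
    have h3 : (1/(n:ℝ)) * ‖∑ j ∈ range n, psi m (k * ((c^j : ℕ) : ZMod m))‖
        ≤ (1/(n:ℝ)) * ((n:ℝ) - W) := by
      apply mul_le_mul_of_nonneg_left _ (by positivity)
      exact h2
    calc (1/(n:ℝ)) * ‖∑ j ∈ range n, psi m (k * ((c^j : ℕ) : ZMod m))‖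
        ≤ (1/(n:ℝ)) * ((n:ℝ) - W) := h3
      _ = 1 - W/n := by field_simp
  have hmu0 : 0 ≤ 1 - W/n := le_trans (norm_nonneg _) hmu
  have hexp1 : 1 - W/n ≤ Real.exp (-(W/n)) := by
    have := Real.add_one_le_exp (-(W/n))
    linarith
  have hpow1 : ‖muhat (fun i => c ^ (i-1)) n m k‖ ^ (2*t) ≤ (1 - W/n) ^ (2*t) :=
    pow_le_pow_left₀ (norm_nonneg _) hmu _
  have hpow2 : (1 - W/n) ^ (2*t) ≤ Real.exp (-(W/n)) ^ (2*t) :=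
    pow_le_pow_left₀ hmu0 hexp1 _
  have hpow3 : Real.exp (-(W/n)) ^ (2*t) = Real.exp (((2*t : ℕ):ℝ) * (-(W/n))) :=
    (Real.exp_nat_mul _ _).symm
  have hsum : ((2*t : ℕ):ℝ) * (-(W/n)) = ∑ j ∈ range (n-1), (-(2*(t:ℝ)*(w j)/n)) := by
    have h4 : ∑ j ∈ range (n-1), (-(2*(t:ℝ)*(w j)/n)) = (-(2*(t:ℝ)/n)) * ∑ j ∈ range (n-1), w j := by
      rw [Finset.mul_sum]
      apply Finset.sum_congr rfl
      intro j _
      ring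
    rw [h4, ← hW]
    push_cast
    ring
  have hprod : Real.exp (∑ j ∈ range (n-1), (-(2*(t:ℝ)*(w j)/n)))
      = ∏ j ∈ range (n-1), Real.exp (-(2*(t:ℝ)*(w j)/n)) := Real.exp_sum _ _
  have hterm : ∀ j, Real.exp (-(2*(t:ℝ)*(w j)/n))
      = Real.exp (-(t:ℝ)/(κ'*(n:ℝ))) ^ (2*κ'*(w j)) := by
    intro j
    rw [Real.rpow_def_of_pos (Real.exp_pos _), Real.log_exp]
    congr 1
    field_simp
  calc ‖muhat (fun i => c ^ (i-1)) n m k‖ ^ (2*t)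
      ≤ Real.exp (-(W/n)) ^ (2*t) := le_trans hpow1 hpow2
    _ = Real.exp (((2*t : ℕ):ℝ) * (-(W/n))) := hpow3
    _ = ∏ j ∈ range (n-1), Real.exp (-(2*(t:ℝ)*(w j)/n)) := by rw [hsum, hprod]
    _ = ∏ j ∈ range (n-1), Real.exp (-(t:ℝ)/(κ'*(n:ℝ))) ^ (2*κ'*(w j)) := by
        exact Finset.prod_congr rfl (fun j _ => hterm j)


lemma spectral_sum_bound (c n : ℕ) (hc : 2 ≤ c) (hn : 2 ≤ n) (hm : m = c^(n-1))
    (κ' : ℝ) (hκ0 : 0 < κ') (hκ1 : κ' * (1 - Real.cos (π / c)) = 1) (t : ℕ) :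
    ∑ k ∈ Finset.univ.erase (0 : ZMod m), ‖muhat (fun i => c ^ (i-1)) n m k‖ ^ (2*t)
      ≤ (1 + ((c:ℝ) - 1) * Real.exp (-(t:ℝ)/(κ'*(n:ℝ)))) ^ (n-1) - 1 := by
  have hn0 : (0:ℝ) < (n:ℝ) := by
    have : 0 < n := by omega
    exact_mod_cast this
  set X : ℝ := Real.exp (-(t:ℝ)/(κ'*(n:ℝ))) with hX
  have hX0 : 0 < X := Real.exp_pos _
  have hX1 : X ≤ 1 := by
    rw [hX]
    calc Real.exp (-(t:ℝ)/(κ'*(n:ℝ))) ≤ Real.exp 0 := by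
          apply Real.exp_le_exp.2
          apply div_nonpos_of_nonpos_of_nonneg
          · simp
          · positivity
      _ = 1 := Real.exp_zero
  set P : ZMod m → ℝ := fun k => ∏ j ∈ range (n-1),
    X ^ (2*κ'*(1 - |Real.cos (π * (((k * ((c^j * (c-1) : ℕ) : ZMod m)).val : ℕ) : ℝ) / m)|)) with hP
  set Q : ZMod m → ℝ := fun k => ∏ j ∈ range (n-1),
    X ^ (2*κ'*(1 - |Real.cos (π * (((k * ((c^j : ℕ) : ZMod m)).val : ℕ) : ℝ) / m)|)) with hQ
  have step1 : ∑ k ∈ Finset.univ.erase (0 : ZMod m), ‖muhat (fun i => c ^ (i-1)) n m k‖ ^ (2*t)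
      ≤ ∑ k ∈ Finset.univ.erase (0 : ZMod m), P k := by
    apply Finset.sum_le_sum
    intro k _
    exact muhat_pow_bound c n hc hn t k κ' hκ0 hκ1
  have hP0 : P (0 : ZMod m) = 1 := by
    rw [hP]
    simp only [zero_mul, ZMod.val_zero, Nat.cast_zero, mul_zero, zero_div, Real.cos_zero,
      abs_one, sub_self, Real.rpow_zero]
    exact Finset.prod_const_one
  have step2 : ∑ k ∈ Finset.univ.erase (0 : ZMod m), P k = (∑ k : ZMod m, P k) - 1 := by
    have := Finset.add_sum_erase Finset.univ P (Finset.mem_univ (0 : ZMod m))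
    rw [hP0] at this
    linarith
  -- change of variables k ↦ k * (c-1)
  have hcop : Nat.Coprime (c-1) m := by
    rw [hm]
    apply Nat.Coprime.pow_right
    have h1 : Nat.Coprime (c-1) ((c-1)+1) := by
      unfold Nat.Coprime
      rw [show (c-1) + 1 = 1 + (c-1) * 1 by ring, Nat.gcd_add_mul_left_right (c-1) 1 1,
        Nat.gcd_one_right]
    have h2 : (c-1)+1 = c := by omega
    rw [h2] at h1
    exact h1
  set u : (ZMod m)ˣ := ZMod.unitOfCoprime (c-1) hcop with hu
  have hucoe : (u : ZMod m) = ((c-1 : ℕ) : ZMod m) := rfl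
  have hbij : Function.Bijective (fun k : ZMod m => k * ((c-1 : ℕ) : ZMod m)) := by
    rw [← hucoe]
    exact Units.mulRight_bijective u
  have step3 : ∑ k : ZMod m, P k = ∑ k : ZMod m, Q k := by
    apply Fintype.sum_bijective _ hbij P Q
    intro k
    rw [hP, hQ]
    apply Finset.prod_congr rfl
    intro j _
    have harg : k * ((c^j * (c-1) : ℕ) : ZMod m)
        = (k * ((c-1 : ℕ) : ZMod m)) * ((c^j : ℕ) : ZMod m) := by
      push_cast
      ring
    rw [harg]
  -- to natural number sums
  have step4 : ∑ k : ZMod m, Q k = ∑ v ∈ range m, ∏ j ∈ range (n-1),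
      X ^ (2*κ'*(1 - |Real.cos (π * ((v * c^j % m : ℕ) : ℝ) / m)|)) := by
    apply Finset.sum_nbij' (fun k : ZMod m => k.val) (fun v : ℕ => (v : ZMod m))
    · intro k _
      exact Finset.mem_range.2 (ZMod.val_lt k)
    · intro v _
      exact Finset.mem_univ _
    · intro k _
      rw [ZMod.natCast_val, ZMod.cast_id]
    · intro v hv
      exact ZMod.val_cast_of_lt (Finset.mem_range.1 hv)
    · intro k _
      rw [hQ]
      apply Finset.prod_congr rfl
      intro j _
      have h5 : k * ((c^j : ℕ) : ZMod m) = ((k.val * c^j : ℕ) : ZMod m) := by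
        push_cast
        rw [ZMod.natCast_val, ZMod.cast_id]
      rw [h5, ZMod.val_natCast]
  -- rewrite the cosines
  have step5 : ∀ v ∈ range m, (∏ j ∈ range (n-1),
      X ^ (2*κ'*(1 - |Real.cos (π * ((v * c^j % m : ℕ) : ℝ) / m)|)))
      = ∏ e ∈ range (n-1), X ^ (2*κ'*(1 - |Real.cos (π * (v:ℝ) / (c:ℝ) ^ (e+1))|)) := by
    intro v _
    have hterm : ∀ j ∈ range (n-1),
        X ^ (2*κ'*(1 - |Real.cos (π * ((v * c^j % m : ℕ) : ℝ) / m)|))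
        = X ^ (2*κ'*(1 - |Real.cos (π * (v:ℝ) / (c:ℝ) ^ ((n-1) - j))|)) := by
      intro j hj
      rw [Finset.mem_range] at hj
      have hmpos : 0 < m := Nat.pos_of_ne_zero (NeZero.ne m)
      have hmR : (0:ℝ) < (m:ℝ) := by exact_mod_cast hmpos
      have h6' : ((v * c^j : ℕ) : ℝ) = ((v * c^j % m : ℕ) : ℝ) + ((v * c^j / m : ℕ) : ℝ) * m := by
        have hdm := Nat.div_add_mod (v * c^j) m
        have : ((m * (v * c^j / m) + v * c^j % m : ℕ) : ℝ) = ((v * c^j : ℕ) : ℝ) := by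
          rw [hdm]
        push_cast at this ⊢
        linarith
      have h6 : π * ((v * c^j : ℕ) : ℝ) / m
          = π * ((v * c^j % m : ℕ) : ℝ) / m + ((v * c^j / m : ℕ) : ℝ) * π := by
        rw [h6']
        field_simp
      have h7 : |Real.cos (π * ((v * c^j % m : ℕ) : ℝ) / m)| = |Real.cos (π * ((v * c^j : ℕ) : ℝ) / m)| := by
        rw [h6, abs_cos_add_nat_mul_pi]
      have h8 : π * ((v * c^j : ℕ) : ℝ) / m = π * (v:ℝ) / (c:ℝ) ^ ((n-1) - j) := by
        have hpow : ((c:ℝ)) ^ (n-1) = (c:ℝ)^j * (c:ℝ)^((n-1) - j) := by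
          rw [← pow_add]
          congr 1
          omega
        have hcR0 : (0:ℝ) < (c:ℝ) := by
          have : 0 < c := by omega
          exact_mod_cast this
        rw [hm]
        push_cast
        rw [hpow]
        have hne1 : ((c:ℝ))^j ≠ 0 := by positivity
        have hne2 : ((c:ℝ))^((n-1)-j) ≠ 0 := by positivity
        field_simp
      rw [h7, h8]
    rw [Finset.prod_congr rfl hterm]
    rw [← Finset.prod_range_reflect
      (fun e => X ^ (2*κ'*(1 - |Real.cos (π * (v:ℝ) / (c:ℝ) ^ (e+1))|))) (n-1)]
    apply Finset.prod_congr rfl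
    intro j hj
    rw [Finset.mem_range] at hj
    have h9 : (n-1) - 1 - j + 1 = (n-1) - j := by omega
    rw [h9]
  have step6 : ∑ v ∈ range m, ∏ j ∈ range (n-1),
      X ^ (2*κ'*(1 - |Real.cos (π * ((v * c^j % m : ℕ) : ℝ) / m)|))
      ≤ (1 + ((c:ℝ) - 1) * X) ^ (n-1) := by
    rw [Finset.sum_congr rfl step5]
    rw [hm]
    exact key_induction c hc κ' X hκ0 hκ1 hX0 hX1 (n-1)
  calc ∑ k ∈ Finset.univ.erase (0 : ZMod m), ‖muhat (fun i => c ^ (i-1)) n m k‖ ^ (2*t)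
      ≤ ∑ k ∈ Finset.univ.erase (0 : ZMod m), P k := step1
    _ = (∑ k : ZMod m, P k) - 1 := step2
    _ = (∑ k : ZMod m, Q k) - 1 := by rw [step3]
    _ ≤ (1 + ((c:ℝ) - 1) * X) ^ (n-1) - 1 := by
        rw [step4]
        linarith [step6]

end RWgeo

open RWgeo

/-- Mixing-time upper bound for first order recurrences:
`t_mix(ε) ≤ κ n log((n-1)(c-1)) - κ n log(log(4ε²+1))` with `κ = 1/(1 - cos(π/c))`. -/
theorem mixing_time_upper_bound_geometric
    (c : ℕ) (hc : 2 ≤ c) (n : ℕ) (hn : 2 ≤ n)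
    (m : ℕ) [NeZero m] (hm : m = c ^ (n - 1))
    (κ : ℝ) (hκ : κ = 1 / (1 - Real.cos (π / c)))
    (ε : ℝ) (hε : 0 < ε) (t : ℕ)
    (ht : κ * n * Real.log (((n : ℝ) - 1) * ((c : ℝ) - 1))
        - κ * n * Real.log (Real.log (4 * ε ^ 2 + 1)) ≤ t) :
    (1 / 2 : ℝ) * ∑ x : ZMod m,
        |walkDist (fun i => c ^ (i - 1)) n m t x - 1 / m| ≤ ε := by
  have hn0 : (0:ℝ) < (n:ℝ) := by
    have : 0 < n := by omega
    exact_mod_cast this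
  have hnR : (2:ℝ) ≤ (n:ℝ) := by exact_mod_cast hn
  have hcR : (2:ℝ) ≤ (c:ℝ) := by exact_mod_cast hc
  have hπ := Real.pi_pos
  have hmpos : 0 < m := Nat.pos_of_ne_zero (NeZero.ne m)
  have hmR : (0:ℝ) < (m:ℝ) := by exact_mod_cast hmpos
  have hcos1 : Real.cos (π / c) < 1 := by
    have h1 : 0 < π / c := by positivity
    have h2 : π / c < 2*π := by
      rw [div_lt_iff₀ (by linarith : (0:ℝ) < (c:ℝ))]
      nlinarith
    rcases lt_or_eq_of_le (Real.cos_le_one (π/c)) with h | h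
    · exact h
    · exfalso
      have := (Real.cos_eq_one_iff_of_lt_of_lt (by linarith) h2).1 h
      linarith
  have hκ0 : 0 < κ := by
    rw [hκ]
    apply div_pos one_pos
    linarith
  have hκ1 : κ * (1 - Real.cos (π / c)) = 1 := by
    have hne : (1:ℝ) - Real.cos (π / c) ≠ 0 := by linarith
    rw [hκ, div_mul_eq_mul_div, one_mul, div_self hne]
  set L : ℝ := Real.log (4 * ε^2 + 1) with hL
  have hL0 : 0 < L := Real.log_pos (by nlinarith)
  set M : ℝ := ((n:ℝ) - 1) * ((c:ℝ) - 1) with hM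
  have hM0 : 0 < M := by nlinarith
  set X : ℝ := Real.exp (-(t:ℝ)/(κ*(n:ℝ))) with hX
  have hX0 : 0 < X := Real.exp_pos _
  have hXM : M * X ≤ L := by
    have hκn : 0 < κ * (n:ℝ) := by positivity
    have h2 : -(t:ℝ)/(κ*(n:ℝ)) ≤ Real.log L - Real.log M := by
      rw [div_le_iff₀ hκn]
      nlinarith [ht]
    have h3 : X ≤ L / M := by
      rw [hX]
      calc Real.exp (-(t:ℝ)/(κ*(n:ℝ))) ≤ Real.exp (Real.log L - Real.log M) :=
            Real.exp_le_exp.2 h2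
        _ = L / M := by rw [Real.exp_sub, Real.exp_log hL0, Real.exp_log hM0]
    calc M * X ≤ M * (L/M) := mul_le_mul_of_nonneg_left h3 (le_of_lt hM0)
      _ = L := by field_simp
  -- the ℓ² machinery
  have hFk : ∀ k : ZMod m, k ≠ 0 →
      (∑ x : ZMod m, ((walkDist (fun i => c ^ (i - 1)) n m t x - 1/(m:ℝ) : ℝ) : ℂ) * psi m (k * x))
      = muhat (fun i => c ^ (i - 1)) n m k ^ t := by
    intro k hk
    have hsplitf : ∀ x : ZMod m,
        ((walkDist (fun i => c ^ (i - 1)) n m t x - 1/(m:ℝ) : ℝ) : ℂ) * psi m (k * x)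
        = (walkDist (fun i => c ^ (i - 1)) n m t x : ℂ) * psi m (k * x)
          - (1/(m:ℂ)) * psi m (k * x) := by
      intro x
      push_cast
      ring
    rw [Finset.sum_congr rfl (fun x _ => hsplitf x), Finset.sum_sub_distrib]
    have hzero : ∑ x : ZMod m, (1/(m:ℂ)) * psi m (k * x) = 0 := by
      rw [← Finset.mul_sum]
      have h4 : ∑ x : ZMod m, psi m (k * x) = ∑ x : ZMod m, psi m (x * k) :=
        Finset.sum_congr rfl (fun x _ => by rw [mul_comm])
      rw [h4, sum_psi_mul_ne k hk, mul_zero]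
    rw [hzero, sub_zero]
    exact phat_pow (fun i => c ^ (i - 1)) n t k
  have hF0 : (∑ x : ZMod m, ((walkDist (fun i => c ^ (i - 1)) n m t x - 1/(m:ℝ) : ℝ) : ℂ) * psi m ((0 : ZMod m) * x)) = 0 := by
    have h5 : ∀ x : ZMod m,
        ((walkDist (fun i => c ^ (i - 1)) n m t x - 1/(m:ℝ) : ℝ) : ℂ) * psi m ((0 : ZMod m) * x)
        = ((walkDist (fun i => c ^ (i - 1)) n m t x - 1/(m:ℝ) : ℝ) : ℂ) := by
      intro x
      rw [zero_mul, psi_zero, mul_one]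
    rw [Finset.sum_congr rfl (fun x _ => h5 x)]
    have h6 : ∑ x : ZMod m, ((walkDist (fun i => c ^ (i - 1)) n m t x - 1/(m:ℝ) : ℝ) : ℂ)
        = (((∑ x : ZMod m, (walkDist (fun i => c ^ (i - 1)) n m t x - 1/(m:ℝ)) : ℝ)) : ℂ) := by
      push_cast
      rfl
    rw [h6]
    have h7 : ∑ x : ZMod m, (walkDist (fun i => c ^ (i - 1)) n m t x - 1/(m:ℝ)) = 0 := by
      rw [Finset.sum_sub_distrib, walk_sum (fun i => c ^ (i - 1)) n (by omega) t]
      rw [Finset.sum_const, Finset.card_univ, ZMod.card]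
      rw [nsmul_eq_mul, mul_one_div_cancel hmR.ne', sub_self]
    rw [h7]
    simp
  have hpars := parseval (fun x : ZMod m => walkDist (fun i => c ^ (i - 1)) n m t x - 1/(m:ℝ))
  have hsplit : ∑ k : ZMod m,
      ‖∑ x : ZMod m, ((walkDist (fun i => c ^ (i - 1)) n m t x - 1/(m:ℝ) : ℝ) : ℂ) * psi m (k * x)‖^2
      = ∑ k ∈ Finset.univ.erase (0 : ZMod m),
      ‖∑ x : ZMod m, ((walkDist (fun i => c ^ (i - 1)) n m t x - 1/(m:ℝ) : ℝ) : ℂ) * psi m (k * x)‖^2 := by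
    rw [← Finset.add_sum_erase Finset.univ _ (Finset.mem_univ (0 : ZMod m))]
    rw [hF0]
    simp
  have herase : ∑ k ∈ Finset.univ.erase (0 : ZMod m),
      ‖∑ x : ZMod m, ((walkDist (fun i => c ^ (i - 1)) n m t x - 1/(m:ℝ) : ℝ) : ℂ) * psi m (k * x)‖^2
      = ∑ k ∈ Finset.univ.erase (0 : ZMod m), ‖muhat (fun i => c ^ (i - 1)) n m k‖ ^ (2*t) := by
    apply Finset.sum_congr rfl
    intro k hk
    rw [hFk k (Finset.ne_of_mem_erase hk)]
    rw [norm_pow, ← pow_mul, mul_comm t 2]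
  have hspec := spectral_sum_bound c n hc hn hm κ hκ0 hκ1 t
  -- Cauchy–Schwarz
  have hcs : (∑ x : ZMod m, |walkDist (fun i => c ^ (i - 1)) n m t x - 1/(m:ℝ)|)^2
      ≤ (m:ℝ) * ∑ x : ZMod m, (walkDist (fun i => c ^ (i - 1)) n m t x - 1/(m:ℝ))^2 := by
    have h8 := Finset.sum_mul_sq_le_sq_mul_sq Finset.univ
      (fun x : ZMod m => |walkDist (fun i => c ^ (i - 1)) n m t x - 1/(m:ℝ)|) (fun _ => (1:ℝ))
    simp only [mul_one, one_pow, sq_abs] at h8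
    rw [Finset.sum_const, Finset.card_univ, ZMod.card] at h8
    calc (∑ x : ZMod m, |walkDist (fun i => c ^ (i - 1)) n m t x - 1/(m:ℝ)|)^2
        ≤ (∑ x : ZMod m, (walkDist (fun i => c ^ (i - 1)) n m t x - 1/(m:ℝ))^2) * ((m:ℕ) • (1:ℝ)) := h8
      _ = (m:ℝ) * ∑ x : ZMod m, (walkDist (fun i => c ^ (i - 1)) n m t x - 1/(m:ℝ))^2 := by
          simp [nsmul_eq_mul]
          ring
  -- final exponential comparison
  have hexpchain : (1 + ((c:ℝ) - 1) * X) ^ (n-1) - 1 ≤ 4 * ε^2 := by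
    have h9 : (1 + ((c:ℝ) - 1) * X) ^ (n-1) ≤ Real.exp (((c:ℝ)-1) * X) ^ (n-1) := by
      apply pow_le_pow_left₀ (by nlinarith)
      have := Real.add_one_le_exp (((c:ℝ)-1) * X)
      linarith
    have h10 : Real.exp (((c:ℝ)-1) * X) ^ (n-1) = Real.exp (M * X) := by
      rw [← Real.exp_nat_mul]
      congr 1
      have : ((n-1 : ℕ) : ℝ) = (n:ℝ) - 1 := by
        have h11 : 1 ≤ n := by omega
        push_cast [Nat.cast_sub h11]
        ring
      rw [this, hM]
      ring
    have h12 : Real.exp (M * X) ≤ Real.exp L := Real.exp_le_exp.2 hXM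
    have h13 : Real.exp L = 4 * ε^2 + 1 := Real.exp_log (by nlinarith)
    calc (1 + ((c:ℝ) - 1) * X) ^ (n-1) - 1
        ≤ Real.exp (((c:ℝ)-1) * X) ^ (n-1) - 1 := by linarith
      _ = Real.exp (M * X) - 1 := by rw [h10]
      _ ≤ Real.exp L - 1 := by linarith
      _ = 4 * ε^2 := by rw [h13]; ring
  -- combine
  have hkey : (∑ x : ZMod m, |walkDist (fun i => c ^ (i - 1)) n m t x - 1/(m:ℝ)|)^2 ≤ 4 * ε^2 := by
    calc (∑ x : ZMod m, |walkDist (fun i => c ^ (i - 1)) n m t x - 1/(m:ℝ)|)^2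
        ≤ (m:ℝ) * ∑ x : ZMod m, (walkDist (fun i => c ^ (i - 1)) n m t x - 1/(m:ℝ))^2 := hcs
      _ = ∑ k : ZMod m, ‖∑ x : ZMod m, ((walkDist (fun i => c ^ (i - 1)) n m t x - 1/(m:ℝ) : ℝ) : ℂ) * psi m (k * x)‖^2 := hpars.symm
      _ = ∑ k ∈ Finset.univ.erase (0 : ZMod m), ‖muhat (fun i => c ^ (i - 1)) n m k‖ ^ (2*t) := by
          rw [hsplit, herase]
      _ ≤ (1 + ((c:ℝ) - 1) * X) ^ (n-1) - 1 := hspec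
      _ ≤ 4 * ε^2 := hexpchain
  have hnn : 0 ≤ ∑ x : ZMod m, |walkDist (fun i => c ^ (i - 1)) n m t x - 1/(m:ℝ)| :=
    Finset.sum_nonneg (fun x _ => abs_nonneg _)
  have hfin : ∑ x : ZMod m, |walkDist (fun i => c ^ (i - 1)) n m t x - 1/(m:ℝ)| ≤ 2*ε := by
    nlinarith [hkey, hnn, hε]
  linarith
end

section
/- Let c ≥ 2 and n ≥ 2 be integers, set m = c^{n−1}, and let λ_k = (1/n)·Σ_{i=1}^{n} exp(2π I k c^{i−1} / m) be the eigenvalues of the random walk on ℤ_m determined by G i = c^{i−1}, where I = √(-1). Then λ_{c^{n−2}} = (exp(2π I / c) + (n − 1))/n, and |λ_{c^{n−2}}| ≥ 1 − (1 − cos(2π/c))/n. -/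
open Finset Real

/-- The eigenvalue with index `k = c^(n-2)` of the random walk determined by
`G i = c^(i-1)` equals `(exp(2πI/c) + (n-1))/n`, and its modulus is at least
`1 - (1 - cos(2π/c))/n`. -/
theorem special_eigenvalue_geometric
    (c n : ℕ) (hc : 2 ≤ c) (hn : 2 ≤ n) (m : ℕ) (hm : m = c ^ (n - 1)) :
    (1 / n : ℂ) * ∑ i ∈ Finset.Icc 1 n,
        Complex.exp (2 * π * Complex.I * (c ^ (n - 2) : ℕ) * (c ^ (i - 1) : ℕ) / m) =
      (Complex.exp (2 * π * Complex.I / c) + ((n : ℂ) - 1)) / n ∧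
    1 - (1 - Real.cos (2 * π / c)) / n ≤
      ‖(Complex.exp (2 * π * Complex.I / c) + ((n : ℂ) - 1)) / n‖ := by
  have hc0 : (c : ℂ) ≠ 0 := Nat.cast_ne_zero.mpr (by omega)
  have hnR : (0 : ℝ) < n := by positivity
  constructor
  · have hset : Finset.Icc 1 n = insert 1 (Finset.Icc 2 n) := by
      ext x; simp [Finset.mem_Icc, Finset.mem_insert]; omega
    have hterm : ∀ i ∈ Finset.Icc 2 n,
        Complex.exp (2 * π * Complex.I * (c ^ (n - 2) : ℕ) * (c ^ (i - 1) : ℕ) / m) = 1 := by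
      intro i hi
      simp only [Finset.mem_Icc] at hi
      have harg : 2 * π * Complex.I * (c ^ (n - 2) : ℕ) * (c ^ (i - 1) : ℕ) / (m : ℂ)
          = ((c ^ (i - 2) : ℕ) : ℤ) * (2 * π * Complex.I) := by
        have hpow : (c : ℂ) ^ (n - 2) * (c : ℂ) ^ (i - 1)
            = (c : ℂ) ^ (i - 2) * (c : ℂ) ^ (n - 1) := by
          rw [← pow_add, ← pow_add]; congr 1; omega
        push_cast [hm]
        rw [div_eq_iff (pow_ne_zero _ hc0)]
        calc 2 * π * Complex.I * (c : ℂ) ^ (n - 2) * (c : ℂ) ^ (i - 1)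
            = 2 * π * Complex.I * ((c : ℂ) ^ (n - 2) * (c : ℂ) ^ (i - 1)) := by ring
          _ = (c : ℂ) ^ (i - 2) * (2 * π * Complex.I) * (c : ℂ) ^ (n - 1) := by
              rw [hpow]; ring
      rw [harg, Complex.exp_int_mul_two_pi_mul_I]
    have hone : Complex.exp (2 * π * Complex.I * (c ^ (n - 2) : ℕ) * (c ^ (1 - 1) : ℕ) / m)
        = Complex.exp (2 * π * Complex.I / c) := by
      congr 1
      have hpow : (c : ℂ) ^ (n - 1) = (c : ℂ) ^ (n - 2) * c := by
        rw [← pow_succ]; congr 1; omega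
      push_cast [hm]
      rw [hpow]
      field_simp
    rw [hset, Finset.sum_insert (by simp), hone, Finset.sum_congr rfl hterm]
    simp only [Finset.sum_const, Nat.card_Icc, nsmul_eq_mul, mul_one]
    have hn0 : (n : ℂ) ≠ 0 := Nat.cast_ne_zero.mpr (by omega)
    have hcard : ((n + 1 - 2 : ℕ) : ℂ) = (n : ℂ) - 1 := by
      have : n + 1 - 2 = n - 1 := by omega
      rw [this, Nat.cast_sub (by omega : 1 ≤ n), Nat.cast_one]
    rw [hcard]
    field_simp
  · have habs : ((n : ℝ) - 1) + Real.cos (2 * π / c) ≤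
        ‖Complex.exp (2 * π * Complex.I / c) + ((n : ℂ) - 1)‖ := by
      have hre : (Complex.exp (2 * π * Complex.I / c) + ((n : ℂ) - 1)).re
          = Real.cos (2 * π / c) + ((n : ℝ) - 1) := by
        have : (2 * π * Complex.I / c : ℂ) = ((2 * π / c : ℝ) : ℂ) * Complex.I := by
          push_cast; ring
        rw [this, Complex.add_re, Complex.exp_ofReal_mul_I_re]
        simp
      calc ((n : ℝ) - 1) + Real.cos (2 * π / c)
          = (Complex.exp (2 * π * Complex.I / c) + ((n : ℂ) - 1)).re := by rw [hre]; ring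
        _ ≤ ‖_‖ := Complex.re_le_norm _
    rw [norm_div, Complex.norm_natCast]
    have heq : 1 - (1 - Real.cos (2 * π / c)) / n
        = (((n : ℝ) - 1) + Real.cos (2 * π / c)) / n := by
      field_simp; ring
    rw [heq]
    gcongr
end

section
/- Let c ≥ 2 be an integer, fix an integer n ≥ 2, and consider the random walk on ℤ_m for m = c^{n−1} determined by the sequence G i = c^{i−1} (i = 1, …, n), with t-step distribution p and uniform distribution π. Set γ = 1/(1 − cos(2π/c)). Then for every real ε with 0 < ε < 1/2 and every natural number t, if (1/2)·Σ_{x ∈ ZMod m} |p t x − π x| ≤ ε then t ≥ (γ·n − 1)·log(1/(2ε)). -/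
open Finset Real

lemma pow_val_add (m : ℕ) [NeZero m] (ω : ℂ) (hω : ω ^ m = 1) (x y : ZMod m) :
    ω ^ (x + y).val = ω ^ x.val * ω ^ y.val := by
  rw [ZMod.val_add, ← pow_add]
  conv_rhs => rw [← Nat.mod_add_div (x.val + y.val) m]
  rw [pow_add, pow_mul, hω, one_pow, mul_one]

lemma sum_pow_val (m : ℕ) [NeZero m] (ω : ℂ) :
    ∑ x : ZMod m, ω ^ x.val = ∑ j ∈ Finset.range m, ω ^ j := by
  apply Finset.sum_nbij' (fun x : ZMod m => x.val) (fun j => (j : ZMod m))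
  · intro x _; exact Finset.mem_range.mpr (ZMod.val_lt x)
  · intro j _; exact Finset.mem_univ _
  · intro x _; simp [ZMod.natCast_val, ZMod.cast_id]
  · intro j hj; exact ZMod.val_natCast_of_lt (Finset.mem_range.mp hj)
  · intro x _; rfl

lemma walk_char (G : ℕ → ℕ) (n m : ℕ) [NeZero m] (ω : ℂ) (hω : ω ^ m = 1) (t : ℕ) :
    ∑ x : ZMod m, (walkDist G n m t x : ℂ) * ω ^ x.val
      = (∑ y : ZMod m, (stepDist G n m y : ℂ) * ω ^ y.val) ^ t := by
  induction t with
  | zero =>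
    simp only [walkDist, pow_zero]
    rw [Finset.sum_eq_single (0 : ZMod m)]
    · simp
    · intro b _ hb; simp [hb]
    · simp
  | succ t ih =>
    have key : ∀ y : ZMod m, ∑ x : ZMod m, (stepDist G n m (x - y) : ℂ) * ω ^ x.val
        = ω ^ y.val * ∑ z : ZMod m, (stepDist G n m z : ℂ) * ω ^ z.val := by
      intro y
      rw [Finset.mul_sum]
      refine Fintype.sum_equiv (Equiv.subRight y) _ _ fun x => ?_
      have h2 := pow_val_add m ω hω y (x - y)
      rw [add_sub_cancel] at h2
      simp only [Equiv.subRight_apply, h2]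
      ring
    rw [pow_succ, ← ih, Finset.sum_mul]
    simp only [walkDist]
    push_cast
    simp only [Finset.sum_mul]
    rw [Finset.sum_comm]
    refine Finset.sum_congr rfl fun y _ => ?_
    simp only [mul_assoc, ← Finset.mul_sum]
    rw [key y]

lemma pow_mod_eq (ω : ℂ) (m a : ℕ) (hω : ω ^ m = 1) : ω ^ (a % m) = ω ^ a := by
  conv_rhs => rw [← Nat.mod_add_div a m]
  rw [pow_add, pow_mul, hω, one_pow, mul_one]

lemma step_char (G : ℕ → ℕ) (n m : ℕ) [NeZero m] (ω : ℂ) :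
    ∑ y : ZMod m, (stepDist G n m y : ℂ) * ω ^ y.val
      = (1 / n : ℂ) * ∑ i ∈ Finset.Icc 1 n, ω ^ ((G i : ZMod m)).val := by
  have fib := Finset.sum_fiberwise (Finset.Icc 1 n) (fun i => ((G i : ZMod m)))
    (fun i => ω ^ ((G i : ZMod m)).val)
  rw [← fib, Finset.mul_sum]
  refine Finset.sum_congr rfl fun y _ => ?_
  have h1 : ∑ i ∈ (Finset.Icc 1 n).filter (fun i => (G i : ZMod m) = y),
      ω ^ ((G i : ZMod m)).val
      = ((Finset.Icc 1 n).filter (fun i => (G i : ZMod m) = y)).card • ω ^ y.val := by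
    rw [Finset.sum_congr rfl (fun i hi => by rw [(Finset.mem_filter.mp hi).2]),
      Finset.sum_const]
  rw [h1, nsmul_eq_mul, stepDist]
  push_cast
  ring

/-- Mixing-time lower bound for first order recurrences:
`t_mix(ε) ≥ (γ n - 1) log(1/(2ε))` with `γ = 1/(1 - cos(2π/c))`. -/
theorem mixing_time_lower_bound_geometric
    (c : ℕ) (hc : 2 ≤ c) (n : ℕ) (hn : 2 ≤ n)
    (m : ℕ) [NeZero m] (hm : m = c ^ (n - 1))
    (γ : ℝ) (hγ : γ = 1 / (1 - Real.cos (2 * π / c)))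
    (ε : ℝ) (hε0 : 0 < ε) (hε : ε < 1 / 2) (t : ℕ)
    (hTV : (1 / 2 : ℝ) * ∑ x : ZMod m,
        |walkDist (fun i => c ^ (i - 1)) n m t x - 1 / m| ≤ ε) :
    (γ * n - 1) * Real.log (1 / (2 * ε)) ≤ t := by
  set G : ℕ → ℕ := fun i => c ^ (i - 1) with hG
  have hcR : (2 : ℝ) ≤ c := by exact_mod_cast hc
  have hc0 : (0 : ℝ) < c := by linarith
  set θ : ℝ := 2 * π / c with hθ
  have hπ := Real.pi_pos
  have hθ0 : 0 < θ := by positivity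
  have hθ2π : θ < 2 * π := by
    rw [hθ, div_lt_iff₀ hc0]
    nlinarith
  have hcos : Real.cos θ < 1 := by
    refine lt_of_le_of_ne (Real.cos_le_one θ) fun h => ?_
    have := (Real.cos_eq_one_iff_of_lt_of_lt (by linarith) hθ2π).mp h
    exact absurd this (ne_of_gt hθ0)
  have hcos' : -1 ≤ Real.cos θ := Real.neg_one_le_cos θ
  have h1cos : 0 < 1 - Real.cos θ := by linarith
  have hm2 : 2 ≤ m := by
    rw [hm]
    calc 2 = 2 ^ 1 := rfl
      _ ≤ c ^ 1 := Nat.pow_le_pow_left hc 1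
      _ ≤ c ^ (n - 1) := Nat.pow_le_pow_right (by omega) (by omega)
  set ω : ℂ := Complex.exp ((θ : ℂ) * Complex.I) with hω
  have hcC : (c : ℂ) ≠ 0 := Nat.cast_ne_zero.mpr (by omega)
  have hωc : ω ^ c = 1 := by
    rw [hω, ← Complex.exp_nat_mul]
    have h : (c : ℂ) * ((θ : ℂ) * Complex.I) = 2 * π * Complex.I := by
      rw [hθ]
      push_cast
      field_simp
    rw [h, Complex.exp_two_pi_mul_I]
  have hcdvd : c ∣ m := hm ▸ dvd_pow_self c (by omega : n - 1 ≠ 0)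
  have hωm : ω ^ m = 1 := by
    obtain ⟨k, hk⟩ := hcdvd
    rw [hk, pow_mul, hωc, one_pow]
  have hω1 : ω ≠ 1 := by
    rw [hω]
    intro h
    obtain ⟨k, hk⟩ := Complex.exp_eq_one_iff.mp h
    have h2 : (θ : ℂ) = (k : ℂ) * (2 * π) := by
      have hI : (Complex.I : ℂ) ≠ 0 := Complex.I_ne_zero
      have := mul_right_cancel₀ hI (by rw [hk]; ring : (θ : ℂ) * Complex.I
        = ((k : ℂ) * (2 * π)) * Complex.I)
      exact this
    have hr : θ = (k : ℝ) * (2 * π) := by exact_mod_cast h2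
    rcases le_or_gt (k : ℝ) 0 with h' | h'
    · nlinarith
    · have : (1 : ℝ) ≤ (k : ℝ) := by exact_mod_cast (by exact_mod_cast h' : (0:ℤ) < k)
      nlinarith
  have hre : ω.re = Real.cos θ := by
    rw [hω]
    simpa using Complex.exp_ofReal_mul_I_re θ
  have habsω : ‖ω‖ = 1 := by
    rw [hω]
    simpa using Complex.norm_exp_ofReal_mul_I θ
  -- the eigenvalue
  set lam : ℂ := ∑ y : ZMod m, (stepDist G n m y : ℂ) * ω ^ y.val with hlam
  have hvals : ∀ i ∈ Finset.Icc 1 n, ω ^ (((G i : ℕ) : ZMod m)).val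
      = (1 : ℂ) + (if i = 1 then ω - 1 else 0) := by
    intro i hi
    obtain ⟨hi1, hin⟩ := Finset.mem_Icc.mp hi
    have hval : (((G i : ℕ) : ZMod m)).val = (G i) % m := ZMod.val_natCast m (G i)
    rw [hval, pow_mod_eq ω m _ hωm]
    by_cases h1 : i = 1
    · subst h1
      have hG1 : G 1 = 1 := by simp [hG]
      rw [hG1, pow_one, if_pos rfl]
      ring
    · have h2 : 2 ≤ i := by omega
      have hGi : G i = c ^ (i - 2) * c := by
        have h3 : i - 1 = (i - 2) + 1 := by omega
        show c ^ (i - 1) = _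
        rw [h3, pow_succ]
      rw [hGi, mul_comm, pow_mul, hωc, one_pow, if_neg h1]
      ring
  have hnR : (2 : ℝ) ≤ n := by exact_mod_cast hn
  have hnpos : (0 : ℝ) < n := by linarith
  have hstep : (n : ℂ) * lam = ((n : ℂ) - 1) + ω := by
    rw [hlam, step_char, Finset.sum_congr rfl hvals, Finset.sum_add_distrib,
      Finset.sum_const, Finset.sum_ite_eq' (Finset.Icc 1 n) 1 (fun _ => ω - 1)]
    have h1mem : (1 : ℕ) ∈ Finset.Icc 1 n := Finset.mem_Icc.mpr ⟨le_refl _, by omega⟩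
    rw [if_pos h1mem, Nat.card_Icc]
    have hcard : ((n + 1 - 1 : ℕ) : ℂ) = (n : ℂ) := by norm_cast
    have hnC : (n : ℂ) ≠ 0 := Nat.cast_ne_zero.mpr (by omega)
    rw [nsmul_eq_mul, hcard]
    field_simp
    ring
  have hstepre : (n : ℝ) * lam.re = ((n : ℝ) - 1) + Real.cos θ := by
    have h := congrArg Complex.re hstep
    simpa [Complex.mul_re, Complex.add_re, Complex.sub_re, hre] using h
  set r : ℝ := 1 - (1 - Real.cos θ) / n with hr
  have hlamre : lam.re = r := by
    rw [hr]
    field_simp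
    linarith [hstepre]
  -- the TV bound gives |lam|^t ≤ 2ε
  have hsum0 : ∑ x : ZMod m, (ω ^ x.val) = 0 := by
    rw [sum_pow_val, geom_sum_eq hω1, hωm, sub_self, zero_div]
  have hwc := walk_char G n m ω hωm t
  have hident : lam ^ t = ∑ x : ZMod m,
      ((walkDist G n m t x - 1 / m : ℝ) : ℂ) * ω ^ x.val := by
    rw [hlam, ← hwc, ← sub_eq_zero, ← Finset.sum_sub_distrib]
    have h : ∀ x : ZMod m, (walkDist G n m t x : ℂ) * ω ^ x.val -
        ((walkDist G n m t x - 1 / m : ℝ) : ℂ) * ω ^ x.val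
        = ((1 : ℝ) / m : ℂ) * ω ^ x.val := by
      intro x
      push_cast
      ring
    rw [Finset.sum_congr rfl (fun x _ => h x), ← Finset.mul_sum, hsum0, mul_zero]
  have hpow : ‖lam‖ ^ t ≤ 2 * ε := by
    have h1 : ‖lam ^ t‖ ≤ ∑ x : ZMod m,
        ‖((walkDist G n m t x - 1 / m : ℝ) : ℂ) * ω ^ x.val‖ := by
      rw [hident]
      exact norm_sum_le _ _
    have h2 : ∀ x : ZMod m, ‖((walkDist G n m t x - 1 / m : ℝ) : ℂ) * ω ^ x.val‖
        = |walkDist G n m t x - 1 / m| := by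
      intro x
      rw [norm_mul, norm_pow, habsω, one_pow, mul_one, Complex.norm_real, Real.norm_eq_abs]
    rw [norm_pow] at h1
    calc ‖lam‖ ^ t ≤ ∑ x : ZMod m,
        ‖((walkDist G n m t x - 1 / m : ℝ) : ℂ) * ω ^ x.val‖ := h1
      _ = ∑ x : ZMod m, |walkDist G n m t x - 1 / m| :=
          Finset.sum_congr rfl fun x _ => h2 x
      _ ≤ 2 * ε := by linarith
  -- final real analysis
  have hL0 : 0 ≤ Real.log (1 / (2 * ε)) := by
    apply Real.log_nonneg
    rw [le_div_iff₀ (by linarith : (0:ℝ) < 2 * ε)]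
    linarith
  have hγpos : 0 < γ := by
    rw [hγ]
    exact div_pos one_pos h1cos
  rcases le_or_gt (γ * n) 1 with hcase | hcase
  · have h1 : γ * n - 1 ≤ 0 := by linarith
    have h2 := mul_nonpos_of_nonpos_of_nonneg h1 hL0
    have ht0 : (0:ℝ) ≤ t := by positivity
    linarith
  · set g : ℝ := γ * n with hg
    have hgpos : (0:ℝ) < g := by rw [hg]; positivity
    have hinvγ : 1 - Real.cos θ = 1 / γ := by
      rw [hγ, one_div_one_div]
    have hrg : r = 1 - 1 / g := by
      rw [hr, hg]
      have : (1 : ℝ) / (γ * n) = (1 - Real.cos θ) / n := by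
        rw [hinvγ]
        field_simp
      rw [this]
    have hr0 : 0 < r := by
      rw [hrg]
      have h3 : 1 / g < 1 := by
        rw [div_lt_one hgpos]
        linarith
      linarith
    have hrabs : r ≤ ‖lam‖ := hlamre ▸ Complex.re_le_norm lam
    have hrpow : r ^ t ≤ 2 * ε :=
      le_trans (pow_le_pow_left₀ (le_of_lt hr0) hrabs t) hpow
    have hloginv : Real.log (1 / (2 * ε)) ≤ (t : ℝ) * (1 / r - 1) := by
      have h1 : Real.log (1 / (2 * ε)) = -Real.log (2 * ε) := by
        rw [one_div, Real.log_inv]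
      have hlog : (t : ℝ) * Real.log r ≤ Real.log (2 * ε) := by
        rw [← Real.log_pow]
        exact Real.log_le_log (by positivity) hrpow
      have h2 : -Real.log r = Real.log (1 / r) := by
        rw [one_div, Real.log_inv]
      have h3 : Real.log (1 / r) ≤ 1 / r - 1 :=
        Real.log_le_sub_one_of_pos (by positivity)
      have h4 : -Real.log (2 * ε) ≤ (t : ℝ) * (-Real.log r) := by
        have : (t : ℝ) * (-Real.log r) = -((t : ℝ) * Real.log r) := by ring
        rw [this]
        linarith
      calc Real.log (1 / (2 * ε)) = -Real.log (2 * ε) := h1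
        _ ≤ (t : ℝ) * (-Real.log r) := h4
        _ = (t : ℝ) * Real.log (1 / r) := by rw [h2]
        _ ≤ (t : ℝ) * (1 / r - 1) :=
            mul_le_mul_of_nonneg_left h3 (Nat.cast_nonneg t)
    have hg1pos : 0 < g - 1 := by linarith
    have hkey : 1 / r - 1 = 1 / (g - 1) := by
      have hgne : g - 1 ≠ 0 := by intro h; linarith
      have h5 : (1:ℝ) - 1/g = (g-1)/g := by field_simp
      rw [hrg, h5, one_div_div]
      field_simp
      ring
    rw [hkey] at hloginv
    have hfin : (g - 1) * Real.log (1 / (2 * ε)) ≤ (t : ℝ) := by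
      calc (g - 1) * Real.log (1 / (2 * ε))
          ≤ (g - 1) * ((t : ℝ) * (1 / (g - 1))) :=
            mul_le_mul_of_nonneg_left hloginv (le_of_lt hg1pos)
        _ = (t : ℝ) := by field_simp
    linarith
end
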